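/- Every Hausdorff countably compact Clifford topological semigroup S whose set of idempotents E is a metrizable G_δ-subset of S is topologically periodic: for every a ∈ S and every neighborhood O of a there exists an integer n ≥ 2 with a^n ∈ O. -/

import Mathlib

/-- `spow a n` is the power `a ^ n` in a semigroup, for `n ≥ 1` (with `spow a 0 = a`). -/
def spow {S : Type*} [Semigroup S] (a : S) : ℕ → S
  | 0 => a
  | 1 => a
  | (n + 2) => spow a (n + 1) * a

/-- `X` is countably compact: every countable open cover has a finite subcover. -/
def CountablyCompact (X : Type*) [TopologicalSpace X] : Prop :=
  ∀ U : ℕ → Set X, (∀ n, IsOpen (U n)) → (⋃ n, U n) = Set.univ →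
    ∃ N : Finset ℕ, (⋃ n ∈ N, U n) = Set.univ


section Algebra
variable {S : Type*} [Semigroup S]

/-- Drazin: anything commuting with `x` commutes with its commuting inverse `b`. -/
theorem drazin {x b c : S} (h1 : x * b * x = x) (h2 : b * x * b = b) (h3 : x * b = b * x)
    (hc : c * x = x * c) : c * b = b * c := by
  have h2' : b * (x * b) = b := by rw [← mul_assoc]; exact h2
  have L0 : x * (b * b) = b := by rw [← mul_assoc x b b, h3, mul_assoc b x b, h2']
  have L1 : x * (x * b) = x := by rw [h3, ← mul_assoc x b x, h1]
  have L2 : c * (x * b) = x * (c * b) := by rw [← mul_assoc c x b, hc, mul_assoc x c b]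
  have L3 : (x * b) * c = (b * c) * x := by
    rw [h3, mul_assoc b x c, ← hc, ← mul_assoc b c x]
  have e1 : (x * b) * (c * (x * b)) = c * (x * b) := by
    rw [L2, ← mul_assoc (x*b) x (c*b), h1]
  have e2 : ((x * b) * c) * (x * b) = (x * b) * c := by
    rw [L3, mul_assoc (b*c) x (x*b), L1]
  have comm_h : c * (x * b) = (x * b) * c := by
    rw [← e1, ← mul_assoc (x*b) c (x*b), e2]
  have L5 : c * b = x * ((c * b) * b) := by
    conv_lhs => rw [← L0]
    rw [← mul_assoc c x (b*b), hc, mul_assoc x c (b*b), ← mul_assoc c b b]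
  have hT2 : (x * b) * (c * b) = c * b := by
    conv_lhs => rw [L5]
    rw [← mul_assoc (x*b) x ((c*b)*b), h1, ← L5]
  have hT3 : (x * b) * (c * b) = b * c := by
    rw [← mul_assoc (x*b) c b, L3, mul_assoc (b*c) x b, mul_assoc b c (x*b), comm_h,
      ← mul_assoc b (x*b) c, h2', ]
  rw [← hT2, hT3]

lemma spow_zero (x : S) : spow x 0 = x := rfl
lemma spow_one (x : S) : spow x 1 = x := rfl
lemma spow_succ (x : S) {n : ℕ} (hn : 1 ≤ n) : spow x (n + 1) = spow x n * x := by
  cases n with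
  | zero => omega
  | succ m => rfl

/-- commuting elements commute with spow -/
lemma comm_spow {c x : S} (h : c * x = x * c) (n : ℕ) : c * spow x n = spow x n * c := by
  induction n with
  | zero => exact h
  | succ m ih =>
    cases m with
    | zero => exact h
    | succ k =>
      rw [spow_succ x (by omega : 1 ≤ k + 1), ← mul_assoc, ih, mul_assoc, h, ← mul_assoc]

lemma a_comm_spow (x : S) (n : ℕ) : x * spow x n = spow x n * x := comm_spow rfl n

variable {a b : S}

lemma e_mul_a (h1 : a * b * a = a) : (a * b) * a = a := h1
lemma a_mul_e (h1 : a * b * a = a) (h3 : a * b = b * a) : a * (a * b) = a := by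
  rw [h3, ← mul_assoc a b a, h1]
lemma e_comm_a (h1 : a * b * a = a) (h3 : a * b = b * a) : (a * b) * a = a * (a * b) := by
  rw [e_mul_a h1, a_mul_e h1 h3]

lemma e_mul_spow (h1 : a * b * a = a) (n : ℕ) : (a * b) * spow a n = spow a n := by
  induction n with
  | zero => exact h1
  | succ m ih =>
    cases m with
    | zero => exact h1
    | succ k =>
      rw [spow_succ a (by omega : 1 ≤ k + 1), ← mul_assoc, ih]

lemma spow_mul_e (h1 : a * b * a = a) (h3 : a * b = b * a) (n : ℕ) :
    spow a n * (a * b) = spow a n := by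
  rw [← comm_spow (e_comm_a h1 h3) n, e_mul_spow h1]

lemma spow_mul_spow_inv (h1 : a * b * a = a) (h2 : b * a * b = b) (h3 : a * b = b * a) (n : ℕ) :
    spow a n * spow b n = a * b := by
  induction n with
  | zero => rfl
  | succ m ih =>
    cases m with
    | zero => rfl
    | succ k =>
      have hm : 1 ≤ k + 1 := by omega
      have hcm : a * spow b (k+1) = spow b (k+1) * a := comm_spow h3 (k+1)
      rw [spow_succ a hm, spow_succ b hm, mul_assoc (spow a (k+1)) a (spow b (k+1) * b),
        ← mul_assoc a (spow b (k+1)) b, hcm, mul_assoc (spow b (k+1)) a b,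
        ← mul_assoc (spow a (k+1)) (spow b (k+1)) (a*b), ih, mul_assoc a b (a*b),
        ← mul_assoc b a b, h2]

/-- `spow a n * b = spow a (n-1)` for `n ≥ 2`. -/
lemma spow_mul_inv_one (h1 : a * b * a = a) (h3 : a * b = b * a) {n : ℕ} (hn : 2 ≤ n) :
    spow a n * b = spow a (n - 1) := by
  obtain ⟨m, rfl⟩ : ∃ m, n = m + 1 := ⟨n - 1, by omega⟩
  rw [spow_succ a (by omega), mul_assoc, spow_mul_e h1 h3]
  simp

lemma spow_sub (h1 : a * b * a = a) (h2 : b * a * b = b) (h3 : a * b = b * a) {n t : ℕ}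
    (ht : 1 ≤ t) (htn : t < n) : spow a n * spow b t = spow a (n - t) := by
  induction t with
  | zero => omega
  | succ m ih =>
    cases m with
    | zero => exact spow_mul_inv_one h1 h3 (by omega)
    | succ k =>
      have hkn : k + 1 < n := by omega
      rw [spow_succ b (by omega : 1 ≤ k + 1), ← mul_assoc, ih (by omega) hkn,
        spow_mul_inv_one h1 h3 (by omega : 2 ≤ n - (k+1))]
      have heq : n - (k+1) - 1 = n - (k+1+1) := by omega
      rw [heq]

end Algebra



section Topo
open Set Filter Topology
variable {S : Type*} [TopologicalSpace S] [Semigroup S] [ContinuousMul S] [T2Space S]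

/-- tail sets of a sequence -/
def tailSet (s : ℕ → S) (m : ℕ) : Set S := {t | ∃ n, m ≤ n ∧ s n = t}

/-- cluster point of a sequence: belongs to the closure of every tail -/
def IsClusterOf (z : S) (s : ℕ → S) : Prop := ∀ m, z ∈ closure (tailSet s m)

lemma exists_clusterOf (hcc : CountablyCompact S) (s : ℕ → S) : ∃ z, IsClusterOf z s := by
  by_contra h
  push_neg at h
  have h2 : (⋂ m, closure (tailSet s m)) = ∅ := by
    by_contra h3
    obtain ⟨z, hz⟩ := nonempty_iff_ne_empty.2 h3
    exact h z (fun m => mem_iInter.1 hz m)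
  obtain ⟨N, hN⟩ := hcc (fun m => (closure (tailSet s m))ᶜ)
    (fun m => (isClosed_closure).isOpen_compl)
    (by rw [← compl_iInter, h2, compl_empty])
  -- the element s (N.sup id) is in every tail set with index in N
  have hmem : s (N.sup id) ∈ ⋃ n ∈ N, (closure (tailSet s n))ᶜ := hN ▸ mem_univ _
  simp only [mem_iUnion] at hmem
  obtain ⟨n, hn, hns⟩ := hmem
  exact hns (subset_closure ⟨N.sup id, Finset.le_sup (f := id) hn, rfl⟩)

lemma comm_of_mem_closure {c : S} {A : Set S} (h : ∀ p ∈ A, c * p = p * c) :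
    ∀ p ∈ closure A, c * p = p * c := by
  intro p hp
  have : A ⊆ {t | c * t = t * c} := h
  have hcl : IsClosed {t : S | c * t = t * c} :=
    isClosed_eq (continuous_const.mul continuous_id) (continuous_id.mul continuous_const)
  exact closure_minimal this hcl hp

lemma absorb_of_mem_closure {c : S} {A : Set S} (h : ∀ p ∈ A, c * p = p) :
    ∀ p ∈ closure A, c * p = p := by
  intro p hp
  exact closure_minimal (fun t ht => h t ht)
    (isClosed_eq (continuous_const.mul continuous_id) continuous_id) hp

/-- push a cluster point through left multiplication -/
lemma IsClusterOf.const_mul {z : S} {s : ℕ → S} (hz : IsClusterOf z s) (c : S) :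
    IsClusterOf (c * z) (fun n => c * s n) := by
  intro m
  have : (c * ·) '' tailSet s m ⊆ tailSet (fun n => c * s n) m := by
    rintro _ ⟨t, ⟨n, hn, rfl⟩, rfl⟩
    exact ⟨n, hn, rfl⟩
  exact closure_mono this (map_mem_closure (continuous_const.mul continuous_id) (hz m)
    (fun t ht => mem_image_of_mem _ ht))

lemma IsClusterOf.mul_const {z : S} {s : ℕ → S} (hz : IsClusterOf z s) (c : S) :
    IsClusterOf (z * c) (fun n => s n * c) := by
  intro m
  have : (· * c) '' tailSet s m ⊆ tailSet (fun n => s n * c) m := by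
    rintro _ ⟨t, ⟨n, hn, rfl⟩, rfl⟩
    exact ⟨n, hn, rfl⟩
  exact closure_mono this (map_mem_closure (f := (· * c)) (continuous_id.mul continuous_const)
    (hz m) (fun t ht => mem_image_of_mem _ ht))

/-- cluster (left) times convergent (right), with constant products -/
lemma cluster_mul_tendsto_const {g f v : S} {s t : ℕ → S}
    (hg : IsClusterOf g s) (hf : Tendsto t atTop (𝓝 f))
    (hconst : ∀ n, s n * t n = v) : g * f = v := by
  have : g * f ∈ closure {v} := by
    rw [mem_closure_iff]
    intro W hW hgf
    obtain ⟨U, V, hU, hV, hgU, hfV, hUV⟩ := isOpen_prod_iff.1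
      (hW.preimage (continuous_mul)) g f hgf
    obtain ⟨J, hJ⟩ := (hf.eventually (hV.mem_nhds hfV)).exists_forall_of_atTop
    have := hg J
    rw [mem_closure_iff] at this
    obtain ⟨_, hU', n, hn, rfl⟩ := this U hU hgU
    refine ⟨v, ?_, rfl⟩
    have : (s n, t n) ∈ U ×ˢ V := ⟨hU', hJ n hn⟩
    have := hUV this
    simpa [hconst n] using this
  simpa using this

/-- convergent (left) times cluster (right), with constant products -/
lemma tendsto_mul_cluster_const {g f v : S} {s t : ℕ → S}
    (hf : Tendsto s atTop (𝓝 f)) (hg : IsClusterOf g t)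
    (hconst : ∀ n, s n * t n = v) : f * g = v := by
  have : f * g ∈ closure {v} := by
    rw [mem_closure_iff]
    intro W hW hgf
    obtain ⟨U, V, hU, hV, hfU, hgV, hUV⟩ := isOpen_prod_iff.1
      (hW.preimage (continuous_mul)) f g hgf
    obtain ⟨J, hJ⟩ := (hf.eventually (hU.mem_nhds hfU)).exists_forall_of_atTop
    obtain ⟨_, hV', n, hn, rfl⟩ := (mem_closure_iff.1 (hg J)) V hV hgV
    refine ⟨v, ?_, rfl⟩
    have : (s n, t n) ∈ U ×ˢ V := ⟨hJ n hn, hV'⟩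
    simpa [hconst n] using hUV this
  simpa using this

end Topo



open Set Filter Topology

section Extract
variable {X : Type*} [TopologicalSpace X]

/-- generic subsequence extraction along a countable outer base -/
lemma extract_tendsto {f : X} {s : ℕ → X} {M : ℕ → Set X}
    (hMo : ∀ r, IsOpen (M r)) (hMm : ∀ r, f ∈ M r) (hManti : ∀ i j, i ≤ j → M j ⊆ M i)
    (hbase : ∀ W, IsOpen W → f ∈ W → ∃ r, M r ⊆ W)
    (hs : ∀ m, f ∈ closure {t | ∃ n, m ≤ n ∧ s n = t}) :
    ∃ p : ℕ → ℕ, StrictMono p ∧ (∀ j, 1 ≤ p j) ∧ Tendsto (fun j => s (p j)) atTop (𝓝 f) := by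
  have pick : ∀ m r : ℕ, ∃ n, m ≤ n ∧ s n ∈ M r := by
    intro m r
    obtain ⟨t, htM, n, hn, rfl⟩ := mem_closure_iff.1 (hs m) (M r) (hMo r) (hMm r)
    exact ⟨n, hn, htM⟩
  choose g hg1 hg2 using pick
  set p : ℕ → ℕ := fun j => Nat.rec (g 1 0) (fun j pj => g (pj + 1) (j + 1)) j with hp
  have hsucc : ∀ j, p (j + 1) = g (p j + 1) (j + 1) := fun j => rfl
  have hmono : StrictMono p := by
    apply strictMono_nat_of_lt_succ
    intro j
    have := hg1 (p j + 1) (j + 1)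
    rw [hsucc j]
    omega
  have hone : ∀ j, 1 ≤ p j := by
    intro j
    induction j with
    | zero => exact hg1 1 0
    | succ m ih => have := hg1 (p m + 1) (m + 1); rw [hsucc]; omega
  have hmem : ∀ j, s (p j) ∈ M j := by
    intro j
    cases j with
    | zero => exact hg2 1 0
    | succ m => rw [hsucc]; exact hg2 (p m + 1) (m + 1)
  refine ⟨p, hmono, hone, ?_⟩
  rw [tendsto_atTop_nhds]
  intro W hfW hW
  obtain ⟨r, hr⟩ := hbase W hW hfW
  exact ⟨r, fun n hn => hr (hManti r n hn (hmem n))⟩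

end Extract

section FC
variable {S : Type*} [TopologicalSpace S] [Semigroup S] [ContinuousMul S] [T2Space S]
  [RegularSpace S]


lemma shrink {E O : Set S} (hE : IsCompact E) (hO : IsOpen O) (hEO : E ⊆ O) :
    ∃ V : Set S, IsOpen V ∧ E ⊆ V ∧ closure V ⊆ O := by
  have hx : ∀ x ∈ E, ∃ t ∈ 𝓝 x, IsClosed t ∧ t ⊆ O := fun x hx =>
    exists_mem_nhds_isClosed_subset (hO.mem_nhds (hEO hx))
  choose t ht hcl hsub using hx
  obtain ⟨fin, hfin⟩ := hE.elim_nhds_subcover' (fun x hx => interior (t x hx))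
    (fun x hx => interior_mem_nhds.2 (ht x hx))
  refine ⟨⋃ x ∈ fin, interior (t x x.2), isOpen_biUnion (fun _ _ => isOpen_interior), hfin, ?_⟩
  rw [fin.closure_biUnion]
  exact iUnion₂_subset fun x hx =>
    (closure_minimal interior_subset (hcl x x.2)).trans (hsub x x.2)

noncomputable def chainU {E : Set S} (hE : IsCompact E) (W : ℕ → Set S)
    (hWo : ∀ n, IsOpen (W n)) (hEW : ∀ n, E ⊆ W n) : ℕ → {V : Set S // IsOpen V ∧ E ⊆ V}
  | 0 => ⟨Set.univ, isOpen_univ, Set.subset_univ _⟩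
  | (n + 1) =>
    ⟨(shrink hE ((chainU hE W hWo hEW n).2.1.inter (hWo n))
        (Set.subset_inter (chainU hE W hWo hEW n).2.2 (hEW n))).choose,
     (shrink hE ((chainU hE W hWo hEW n).2.1.inter (hWo n))
        (Set.subset_inter (chainU hE W hWo hEW n).2.2 (hEW n))).choose_spec.1,
     (shrink hE ((chainU hE W hWo hEW n).2.1.inter (hWo n))
        (Set.subset_inter (chainU hE W hWo hEW n).2.2 (hEW n))).choose_spec.2.1⟩

lemma chainU_succ {E : Set S} (hE : IsCompact E) (W : ℕ → Set S)
    (hWo : ∀ n, IsOpen (W n)) (hEW : ∀ n, E ⊆ W n) (n : ℕ) :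
    closure (chainU hE W hWo hEW (n + 1)).1 ⊆ (chainU hE W hWo hEW n).1 ∩ W n :=
  (shrink hE ((chainU hE W hWo hEW n).2.1.inter (hWo n))
      (Set.subset_inter (chainU hE W hWo hEW n).2.2 (hEW n))).choose_spec.2.2

lemma chainU_anti {E : Set S} (hE : IsCompact E) (W : ℕ → Set S)
    (hWo : ∀ n, IsOpen (W n)) (hEW : ∀ n, E ⊆ W n) :
    ∀ i j, i ≤ j → (chainU hE W hWo hEW j).1 ⊆ (chainU hE W hWo hEW i).1 := by
  intro i j hij
  induction j with
  | zero => simp_all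
  | succ m ih =>
    rcases Nat.lt_or_ge i (m+1) with h | h
    · exact (subset_closure.trans (chainU_succ hE W hWo hEW m)).trans
        (inter_subset_left.trans (ih (by omega)))
    · have : i = m + 1 := by omega
      subst this; exact subset_rfl

lemma isCompact_idems (hcc : CountablyCompact S)
    (hmetr : TopologicalSpace.MetrizableSpace {e : S | e * e = e}) :
    IsCompact {e : S | e * e = e} := by
  have hEclosed : IsClosed {e : S | e * e = e} :=
    isClosed_eq (continuous_id.mul continuous_id) continuous_id
  letI : MetricSpace {e : S | e * e = e} := TopologicalSpace.metrizableSpaceMetric _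
  have hseq : SeqCompactSpace {e : S | e * e = e} := by
    constructor
    intro u _
    obtain ⟨z, hz⟩ := exists_clusterOf hcc (fun n => (u n : S))
    have hzE : z ∈ {e : S | e * e = e} := by
      have hsub : tailSet (fun n => (u n : S)) 0 ⊆ {e : S | e * e = e} := by
        rintro _ ⟨n, _, rfl⟩; exact (u n).2
      exact closure_minimal hsub hEclosed (hz 0)
    set zE : {e : S | e * e = e} := ⟨z, hzE⟩ with hzEdef
    have hclE : ∀ m, zE ∈ closure {t | ∃ n, m ≤ n ∧ u n = t} := by
      intro m
      rw [closure_subtype]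
      have himg : Subtype.val '' {t : {e : S | e * e = e} | ∃ n, m ≤ n ∧ u n = t} =
          tailSet (fun n => (u n : S)) m := by
        ext t
        constructor
        · rintro ⟨w, ⟨n, hn, rfl⟩, rfl⟩; exact ⟨n, hn, rfl⟩
        · rintro ⟨n, hn, rfl⟩; exact ⟨u n, ⟨n, hn, rfl⟩, rfl⟩
      rw [himg]
      exact hz m
    have hbase : ∀ W, IsOpen W → zE ∈ W →
        ∃ r : ℕ, Metric.ball zE ((1/2 : ℝ)^r) ⊆ W := by
      intro W hW hzW
      obtain ⟨ε, hε, hb⟩ := Metric.isOpen_iff.1 hW zE hzW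
      obtain ⟨r, hr⟩ := exists_pow_lt_of_lt_one hε (by norm_num : (1/2 : ℝ) < 1)
      exact ⟨r, (Metric.ball_subset_ball hr.le).trans hb⟩
    obtain ⟨p, hpm, _, hpt⟩ := extract_tendsto (f := zE) (s := u)
      (M := fun r => Metric.ball zE ((1/2 : ℝ)^r))
      (fun r => Metric.isOpen_ball)
      (fun r => Metric.mem_ball_self (by positivity))
      (fun i j hij => Metric.ball_subset_ball
        (pow_le_pow_of_le_one (by norm_num) (by norm_num) hij))
      hbase hclE
    exact ⟨zE, Set.mem_univ _, p, hpm, hpt⟩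
  haveI : CompactSpace {e : S | e * e = e} :=
    compactSpace_iff_seqCompactSpace.2 hseq
  exact isCompact_iff_compactSpace.2 this

lemma fc_base (hcc : CountablyCompact S) (hGd : IsGδ {e : S | e * e = e})
    (hmetr : TopologicalSpace.MetrizableSpace {e : S | e * e = e}) {f : S} (hf : f * f = f) :
    ∃ M : ℕ → Set S, (∀ r, IsOpen (M r)) ∧ (∀ r, f ∈ M r) ∧ (∀ i j, i ≤ j → M j ⊆ M i) ∧
      ∀ W, IsOpen W → f ∈ W → ∃ r, M r ⊆ W := by
  have hEc := isCompact_idems hcc hmetr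
  obtain ⟨W, hWo, hWeq⟩ : ∃ W : ℕ → Set S, (∀ n, IsOpen (W n)) ∧
      {e : S | e * e = e} = ⋂ n, W n := by
    obtain ⟨T, hTo, hTc, hTeq⟩ := hGd
    rcases T.eq_empty_or_nonempty with rfl | hne
    · exact ⟨fun _ => Set.univ, fun _ => isOpen_univ, by simpa using hTeq⟩
    · obtain ⟨w, rfl⟩ := hTc.exists_eq_range hne
      exact ⟨w, fun n => hTo _ (Set.mem_range_self n), by rw [hTeq, Set.sInter_range]⟩
  have hEW : ∀ n, {e : S | e * e = e} ⊆ W n := fun n => by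
    rw [hWeq]; exact Set.iInter_subset W n
  set U := chainU hEc W hWo hEW with hUdef
  letI : MetricSpace {e : S | e * e = e} := TopologicalSpace.metrizableSpaceMetric _
  haveI : CompactSpace {e : S | e * e = e} := isCompact_iff_compactSpace.1 hEc
  set fE : {e : S | e * e = e} := ⟨f, hf⟩ with hfEdef
  have sep : ∀ m : ℕ, ∃ O1 O2 : Set S, IsOpen O1 ∧ IsOpen O2 ∧
      (Subtype.val '' closure (Metric.ball fE ((1/2 : ℝ)^(m+1))) ⊆ O1) ∧
      (Subtype.val '' (Metric.ball fE ((1/2 : ℝ)^m))ᶜ ⊆ O2) ∧ Disjoint O1 O2 := by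
    intro m
    have h1 : IsCompact (Subtype.val '' closure (Metric.ball fE ((1/2 : ℝ)^(m+1)))) :=
      isClosed_closure.isCompact.image continuous_subtype_val
    have h2 : IsCompact (Subtype.val '' (Metric.ball fE ((1/2 : ℝ)^m))ᶜ) :=
      Metric.isOpen_ball.isClosed_compl.isCompact.image continuous_subtype_val
    have hd : Disjoint (closure (Metric.ball fE ((1/2 : ℝ)^(m+1))))
        ((Metric.ball fE ((1/2 : ℝ)^m))ᶜ) := by
      have hsub : closure (Metric.ball fE ((1/2 : ℝ)^(m+1))) ⊆ Metric.ball fE ((1/2 : ℝ)^m) :=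
        Metric.closure_ball_subset_closedBall.trans (Metric.closedBall_subset_ball
          (by
            have : (0:ℝ) < (1/2 : ℝ)^m := by positivity
            calc (1/2 : ℝ)^(m+1) = (1/2 : ℝ)^m * (1/2 : ℝ) := by ring
            _ < (1/2 : ℝ)^m := by linarith))
      exact Set.disjoint_left.2 fun t ht htc => htc (hsub ht)
    obtain ⟨O1, O2, hO1, hO2, hs1, hs2, hdd⟩ := SeparatedNhds.of_isCompact_isCompact h1 h2
      (Set.disjoint_image_of_injective Subtype.val_injective hd)
    exact ⟨O1, O2, hO1, hO2, hs1, hs2, hdd⟩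
  choose O1 O2 hO1 hO2 hK1 hK2 hDis using sep
  set Vt : ℕ → Set S := fun m => ⋂ i ∈ Finset.range m, O1 i with hVtdef
  have hVto : ∀ m, IsOpen (Vt m) := fun m => isOpen_biInter_finset (fun i _ => hO1 i)
  have hfVt : ∀ m, f ∈ Vt m := by
    intro m
    refine Set.mem_iInter₂.2 fun i _ => hK1 i ?_
    exact ⟨fE, subset_closure (Metric.mem_ball_self (by positivity)), rfl⟩
  have hVanti : ∀ i j, i ≤ j → Vt j ⊆ Vt i := by
    intro i j hij t ht
    exact Set.mem_iInter₂.2 fun r hr => Set.mem_iInter₂.1 ht r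
      (Finset.mem_range.2 (lt_of_lt_of_le (Finset.mem_range.1 hr) hij))
  have hVcl : ∀ m, closure (Vt (m+1)) ∩ {e : S | e * e = e} ⊆
      Subtype.val '' Metric.ball fE ((1/2 : ℝ)^m) := by
    intro m
    rintro t ⟨ht1, ht2⟩
    have hsub : Vt (m+1) ⊆ O1 m :=
      Set.biInter_subset_of_mem (by simp : m ∈ Finset.range (m+1))
    have hnotO2 : t ∉ O2 m := by
      intro htO2
      have hclO1 : closure (O1 m) ⊆ (O2 m)ᶜ :=
        closure_minimal ((hDis m).subset_compl_right) (hO2 m).isClosed_compl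
      exact hclO1 (closure_mono hsub ht1) htO2
    by_contra hnot
    exact hnotO2 (hK2 m ⟨⟨t, ht2⟩, fun hball => hnot ⟨⟨t, ht2⟩, hball, rfl⟩, rfl⟩)
  refine ⟨fun r => Vt r ∩ (U r).1, fun r => (hVto r).inter (U r).2.1,
    fun r => ⟨hfVt r, (U r).2.2 hf⟩,
    fun i j hij => Set.inter_subset_inter (hVanti i j hij) (chainU_anti hEc W hWo hEW i j hij),
    ?_⟩
  intro Wop hWop hfWop
  by_contra hno
  push_neg at hno
  have hch : ∀ r, ∃ t, t ∈ Vt r ∩ (U r).1 ∧ t ∉ Wop := by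
    intro r
    obtain ⟨t, ht1, ht2⟩ := Set.not_subset.1 (hno r)
    exact ⟨t, ht1, ht2⟩
  choose p hp1 hp2 using hch
  obtain ⟨z, hz⟩ := exists_clusterOf hcc p
  have hzE : z ∈ {e : S | e * e = e} := by
    rw [hWeq]
    refine Set.mem_iInter.2 fun n => ?_
    have hsub : tailSet p (n+1) ⊆ (U (n+1)).1 := by
      rintro _ ⟨j, hj, rfl⟩
      exact chainU_anti hEc W hWo hEW (n+1) j hj (hp1 j).2
    exact (chainU_succ hEc W hWo hEW n (closure_mono hsub (hz (n+1)))).2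
  have hzf : z = f := by
    have hb : ∀ m, dist (⟨z, hzE⟩ : {e : S | e * e = e}) fE < (1/2 : ℝ)^m := by
      intro m
      have hsub : tailSet p (m+1) ⊆ Vt (m+1) := by
        rintro _ ⟨j, hj, rfl⟩
        exact hVanti (m+1) j hj (hp1 j).1
      have : z ∈ closure (Vt (m+1)) ∩ {e : S | e * e = e} :=
        ⟨closure_mono hsub (hz (m+1)), hzE⟩
      obtain ⟨w, hw, hwz⟩ := hVcl m this
      have : w = ⟨z, hzE⟩ := Subtype.val_injective hwz
      rwa [this] at hw
    have hd0 : dist (⟨z, hzE⟩ : {e : S | e * e = e}) fE = 0 := by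
      by_contra hne
      have hpos : 0 < dist (⟨z, hzE⟩ : {e : S | e * e = e}) fE :=
        lt_of_le_of_ne dist_nonneg (Ne.symm hne)
      obtain ⟨m, hm⟩ := exists_pow_lt_of_lt_one hpos (by norm_num : (1/2 : ℝ) < 1)
      exact absurd (hb m) (not_lt.2 hm.le)
    have := dist_eq_zero.1 hd0
    exact congrArg Subtype.val this
  have hzc : z ∈ Wopᶜ := by
    refine closure_minimal ?_ hWop.isClosed_compl (hz 0)
    rintro _ ⟨j, _, rfl⟩
    exact hp2 j
  exact hzc (hzf ▸ hfWop)


end FC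


/-- Every Hausdorff regular countably compact Clifford topological semigroup `S` whose set
of idempotents is a metrizable `G_δ`-set is topologically periodic: every neighborhood of
any `a ∈ S` contains `a ^ n` for some `n ≥ 2`. -/
theorem clifford_topologically_periodic {S : Type*} [TopologicalSpace S] [Semigroup S]
    [ContinuousMul S] [T2Space S] [RegularSpace S]
    (hcc : CountablyCompact S)
    (hClifford : ∀ x : S, ∃ y : S, x * y * x = x ∧ y * x * y = y ∧ x * y = y * x)
    (hGδ : IsGδ {e : S | e * e = e})
    (hmetr : TopologicalSpace.MetrizableSpace {e : S | e * e = e}) :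
    ∀ a : S, ∀ O : Set S, IsOpen O → a ∈ O → ∃ n : ℕ, 2 ≤ n ∧ spow a n ∈ O := by
  intro a O hO haO
  obtain ⟨b, hb1, hb2, hb3⟩ := hClifford a
  set s : ℕ → S := fun n => spow a n with hsdef
  obtain ⟨x, hx⟩ := exists_clusterOf hcc s
  have hcomm_tail : ∀ c : S, (∀ n : ℕ, c * spow a n = spow a n * c) → c * x = x * c := by
    intro c hc
    refine comm_of_mem_closure (A := tailSet s 0) ?_ x (hx 0)
    rintro p ⟨n, _, rfl⟩
    exact hc n
  have hax : a * x = x * a := hcomm_tail a (fun n => a_comm_spow a n)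
  have hbx : b * x = x * b := hcomm_tail b (fun n => comm_spow hb3.symm n)
  have hex : (a * b) * x = x * (a * b) :=
    hcomm_tail (a * b) (fun n => comm_spow (e_comm_a hb1 hb3) n)
  obtain ⟨x', hx'1, hx'2, hx'3⟩ := hClifford x
  have hax' : a * x' = x' * a := drazin hx'1 hx'2 hx'3 hax
  have hbx' : b * x' = x' * b := drazin hx'1 hx'2 hx'3 hbx
  have hex' : (a * b) * x' = x' * (a * b) := drazin hx'1 hx'2 hx'3 hex
  have hh_idem : (x' * x) * (x' * x) = x' * x := by
    rw [mul_assoc x' x (x' * x), ← mul_assoc x x' x, hx'1]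
  have hxh : x * (x' * x) = x := by rw [← mul_assoc x x' x, hx'1]
  have hclh : IsClusterOf (x' * x) (fun n => x' * s n) := hx.const_mul x'
  obtain ⟨Mh, hMh1, hMh2, hMh3, hMh4⟩ := fc_base hcc hGδ hmetr hh_idem
  obtain ⟨nj, hnj_mono, hnj_one, hnj_t⟩ := extract_tendsto hMh1 hMh2 hMh3 hMh4 hclh
  obtain ⟨y, hy⟩ := exists_clusterOf hcc (fun j => spow b (nj j))
  have hcomm_yt : ∀ c : S, (∀ m : ℕ, c * spow b m = spow b m * c) → c * y = y * c := by
    intro c hc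
    refine comm_of_mem_closure (A := tailSet (fun j => spow b (nj j)) 0) ?_ y (hy 0)
    rintro p ⟨j, _, rfl⟩
    exact hc (nj j)
  have hay : a * y = y * a := hcomm_yt a (fun m => comm_spow hb3 m)
  have hebb : (a * b) * b = b * (a * b) := by
    conv_lhs => rw [hb3, mul_assoc b a b]
  have hey : (a * b) * y = y * (a * b) := hcomm_yt (a * b) (fun m => comm_spow hebb m)
  have hxy : x * y = y * x := hcomm_yt x (fun m => comm_spow hbx.symm m)
  have hx'y : x' * y = y * x' := hcomm_yt x' (fun m => comm_spow hbx'.symm m)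
  obtain ⟨y', hy'1, hy'2, hy'3⟩ := hClifford y
  have hay' : a * y' = y' * a := drazin hy'1 hy'2 hy'3 hay
  have hey' : (a * b) * y' = y' * (a * b) := drazin hy'1 hy'2 hy'3 hey
  have hxy' : x * y' = y' * x := drazin hy'1 hy'2 hy'3 hxy
  have hx'y' : x' * y' = y' * x' := drazin hy'1 hy'2 hy'3 hx'y
  have hk_idem : (y' * y) * (y' * y) = y' * y := by
    rw [mul_assoc y' y (y' * y), ← mul_assoc y y' y, hy'1]
  have hyk : y * (y' * y) = y := by rw [← mul_assoc y y' y, hy'1]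
  have hclk : IsClusterOf (y' * y) (fun j => y' * spow b (nj j)) := hy.const_mul y'
  obtain ⟨Mk, hMk1, hMk2, hMk3, hMk4⟩ := fc_base hcc hGδ hmetr hk_idem
  obtain ⟨q, hq_mono, hq_one, hq_t⟩ := extract_tendsto hMk1 hMk2 hMk3 hMk4 hclk
  have c1 : Tendsto (fun i => x' * spow a (nj (q i))) atTop (𝓝 (x' * x)) :=
    hnj_t.comp hq_mono.tendsto_atTop
  have c2 : Tendsto (fun i => y' * spow b (nj (q i))) atTop (𝓝 (y' * y)) := hq_t
  have c1x : Tendsto (fun i => x * (x' * spow a (nj (q i)))) atTop (𝓝 x) := by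
    have := c1.const_mul x
    rwa [hxh] at this
  have c2y : Tendsto (fun i => y * (y' * spow b (nj (q i)))) atTop (𝓝 y) := by
    have := c2.const_mul y
    rwa [hyk] at this
  have cprod : Tendsto
      (fun i => (x * (x' * spow a (nj (q i)))) * (y * (y' * spow b (nj (q i)))))
      atTop (𝓝 (x * y)) := c1x.mul c2y
  have hka : (y' * y) * a = a * (y' * y) := by
    rw [mul_assoc y' y a, ← hay, ← mul_assoc y' a y, ← hay', mul_assoc a y' y]
  have hconst : ∀ i, (x * (x' * spow a (nj (q i)))) * (y * (y' * spow b (nj (q i)))) =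
      ((x * x') * (y' * y)) * (a * b) := by
    intro i
    have hkP : spow a (nj (q i)) * (y' * y) = (y' * y) * spow a (nj (q i)) :=
      (comm_spow hka (nj (q i))).symm
    calc (x * (x' * spow a (nj (q i)))) * (y * (y' * spow b (nj (q i))))
        = ((x * x') * spow a (nj (q i))) * ((y * y') * spow b (nj (q i))) := by
          rw [← mul_assoc x x' (spow a (nj (q i))), ← mul_assoc y y' (spow b (nj (q i)))]
      _ = ((x * x') * spow a (nj (q i))) * ((y' * y) * spow b (nj (q i))) := by rw [hy'3]
      _ = (x * x') * (spow a (nj (q i)) * ((y' * y) * spow b (nj (q i)))) := by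
          rw [mul_assoc (x * x') (spow a (nj (q i))) _]
      _ = (x * x') * ((spow a (nj (q i)) * (y' * y)) * spow b (nj (q i))) := by
          rw [← mul_assoc (spow a (nj (q i))) (y' * y) (spow b (nj (q i)))]
      _ = (x * x') * (((y' * y) * spow a (nj (q i))) * spow b (nj (q i))) := by rw [hkP]
      _ = (x * x') * ((y' * y) * (spow a (nj (q i)) * spow b (nj (q i)))) := by
          rw [mul_assoc (y' * y) (spow a (nj (q i))) (spow b (nj (q i)))]
      _ = (x * x') * ((y' * y) * (a * b)) := by
          rw [spow_mul_spow_inv hb1 hb2 hb3 (nj (q i))]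
      _ = ((x * x') * (y' * y)) * (a * b) := by
          rw [← mul_assoc (x * x') (y' * y) (a * b)]
  have hval : x * y = ((x * x') * (y' * y)) * (a * b) := by
    have heq : (fun i => (x * (x' * spow a (nj (q i)))) * (y * (y' * spow b (nj (q i))))) =
        fun _ => ((x * x') * (y' * y)) * (a * b) := funext hconst
    rw [heq] at cprod
    exact tendsto_nhds_unique cprod tendsto_const_nhds
  have hhk : (x * x') * (y' * y) = (y' * y) * (x * x') := by
    calc (x * x') * (y' * y) = x * (x' * (y' * y)) := mul_assoc x x' (y' * y)
      _ = x * ((x' * y') * y) := by rw [← mul_assoc x' y' y]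
      _ = x * ((y' * x') * y) := by rw [hx'y']
      _ = x * (y' * (x' * y)) := by rw [mul_assoc y' x' y]
      _ = x * (y' * (y * x')) := by rw [hx'y]
      _ = (x * y') * (y * x') := by rw [← mul_assoc x y' (y * x')]
      _ = (y' * x) * (y * x') := by rw [hxy']
      _ = y' * (x * (y * x')) := mul_assoc y' x (y * x')
      _ = y' * ((x * y) * x') := by rw [← mul_assoc x y x']
      _ = y' * ((y * x) * x') := by rw [hxy]
      _ = y' * (y * (x * x')) := by rw [mul_assoc y x x']
      _ = (y' * y) * (x * x') := by rw [← mul_assoc y' y (x * x')]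
  have heh : (a * b) * (x * x') = (x * x') * (a * b) := by
    calc (a * b) * (x * x') = ((a * b) * x) * x' := by rw [← mul_assoc (a * b) x x']
      _ = (x * (a * b)) * x' := by rw [hex]
      _ = x * ((a * b) * x') := mul_assoc x (a * b) x'
      _ = x * (x' * (a * b)) := by rw [hex']
      _ = (x * x') * (a * b) := by rw [← mul_assoc x x' (a * b)]
  have hek : (a * b) * (y' * y) = (y' * y) * (a * b) := by
    calc (a * b) * (y' * y) = ((a * b) * y') * y := by rw [← mul_assoc (a * b) y' y]
      _ = (y' * (a * b)) * y := by rw [hey']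
      _ = y' * ((a * b) * y) := mul_assoc y' (a * b) y
      _ = y' * (y * (a * b)) := by rw [hey]
      _ = (y' * y) * (a * b) := by rw [← mul_assoc y' y (a * b)]
  have he_idem : (a * b) * (a * b) = a * b := by
    rw [mul_assoc a b (a * b), ← mul_assoc b a b, hb2]
  have hH_idem : (x * x') * (x * x') = x * x' := by
    rw [hx'3]
    exact hh_idem
  have hHK_idem : ((x * x') * (y' * y)) * ((x * x') * (y' * y)) = (x * x') * (y' * y) := by
    calc ((x * x') * (y' * y)) * ((x * x') * (y' * y))
        = (x * x') * ((y' * y) * ((x * x') * (y' * y))) := mul_assoc _ _ _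
      _ = (x * x') * (((y' * y) * (x * x')) * (y' * y)) := by
          rw [← mul_assoc (y' * y) (x * x') (y' * y)]
      _ = (x * x') * (((x * x') * (y' * y)) * (y' * y)) := by rw [← hhk]
      _ = (x * x') * ((x * x') * ((y' * y) * (y' * y))) := by
          rw [mul_assoc (x * x') (y' * y) (y' * y)]
      _ = (x * x') * ((x * x') * (y' * y)) := by rw [hk_idem]
      _ = ((x * x') * (x * x')) * (y' * y) := by rw [← mul_assoc]
      _ = (x * x') * (y' * y) := by rw [hH_idem]
  have heHK : (a * b) * ((x * x') * (y' * y)) = ((x * x') * (y' * y)) * (a * b) := by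
    calc (a * b) * ((x * x') * (y' * y)) = ((a * b) * (x * x')) * (y' * y) := by
          rw [← mul_assoc]
      _ = ((x * x') * (a * b)) * (y' * y) := by rw [heh]
      _ = (x * x') * ((a * b) * (y' * y)) := mul_assoc _ _ _
      _ = (x * x') * ((y' * y) * (a * b)) := by rw [hek]
      _ = ((x * x') * (y' * y)) * (a * b) := by rw [← mul_assoc]
  have hf0_idem : (x * y) * (x * y) = x * y := by
    rw [hval]
    calc (((x * x') * (y' * y)) * (a * b)) * (((x * x') * (y' * y)) * (a * b))
        = ((x * x') * (y' * y)) * ((a * b) * (((x * x') * (y' * y)) * (a * b))) :=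
          mul_assoc _ _ _
      _ = ((x * x') * (y' * y)) * (((a * b) * ((x * x') * (y' * y))) * (a * b)) := by
          rw [← mul_assoc (a * b) ((x * x') * (y' * y)) (a * b)]
      _ = ((x * x') * (y' * y)) * ((((x * x') * (y' * y)) * (a * b)) * (a * b)) := by
          rw [heHK]
      _ = ((x * x') * (y' * y)) * (((x * x') * (y' * y)) * ((a * b) * (a * b))) := by
          rw [mul_assoc ((x * x') * (y' * y)) (a * b) (a * b)]
      _ = ((x * x') * (y' * y)) * (((x * x') * (y' * y)) * (a * b)) := by rw [he_idem]
      _ = (((x * x') * (y' * y)) * ((x * x') * (y' * y))) * (a * b) := by rw [← mul_assoc]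
      _ = ((x * x') * (y' * y)) * (a * b) := by rw [hHK_idem]
  have hf0cl : ∀ m, (x * y) ∈ closure (tailSet s m) := by
    intro m
    have h1 : (x * y) ∈ closure (tailSet (fun j => x * spow b (nj j)) 0) :=
      (hy.const_mul x) 0
    refine closure_minimal ?_ isClosed_closure h1
    rintro _ ⟨j, _, rfl⟩
    have hxcl : x ∈ closure (tailSet s (m + nj j + 1)) := hx _
    have h2 : x * spow b (nj j) ∈
        closure ((· * spow b (nj j)) '' tailSet s (m + nj j + 1)) :=
      map_mem_closure (f := (· * spow b (nj j))) (continuous_id.mul continuous_const) hxcl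
        (fun t ht => Set.mem_image_of_mem _ ht)
    refine closure_mono ?_ h2
    rintro _ ⟨t, ⟨n, hn, rfl⟩, rfl⟩
    refine ⟨n - nj j, by omega, ?_⟩
    exact (spow_sub hb1 hb2 hb3 (hnj_one j) (by omega : nj j < n)).symm
  obtain ⟨Mf, hMf1, hMf2, hMf3, hMf4⟩ := fc_base hcc hGδ hmetr hf0_idem
  obtain ⟨p, hp_mono, hp_one, hp_t⟩ := extract_tendsto hMf1 hMf2 hMf3 hMf4 hf0cl
  obtain ⟨g, hg⟩ := exists_clusterOf hcc (fun j => spow b (p j))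
  have hgf : g * (x * y) = b * a :=
    cluster_mul_tendsto_const hg hp_t
      (fun j => spow_mul_spow_inv hb2 hb1 hb3.symm (p j))
  have heabs : (a * b) * (x * y) = x * y := by
    refine absorb_of_mem_closure (A := tailSet s 1) ?_ (x * y) (hf0cl 1)
    rintro _ ⟨n, _, rfl⟩
    exact e_mul_spow hb1 n
  have hf0e : x * y = a * b := by
    have h5 : (b * a) * (x * y) = b * a := by
      calc (b * a) * (x * y) = (g * (x * y)) * (x * y) := by rw [hgf]
        _ = g * ((x * y) * (x * y)) := mul_assoc _ _ _
        _ = g * (x * y) := by rw [hf0_idem]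
        _ = b * a := hgf
    have h6 : (a * b) * (x * y) = a * b := by rw [hb3]; exact h5
    rw [← heabs, h6]
  have hfin : Tendsto (fun j => spow a (p j) * a) atTop (𝓝 a) := by
    have h7 : Tendsto (fun j => spow a (p j) * a) atTop (𝓝 ((x * y) * a)) :=
      hp_t.mul tendsto_const_nhds
    rw [hf0e] at h7
    rwa [show (a * b) * a = a from hb1] at h7
  obtain ⟨N, hN⟩ := tendsto_atTop_nhds.1 hfin O haO hO
  refine ⟨p N + 1, by have := hp_one N; omega, ?_⟩
  rw [spow_succ a (hp_one N)]
  exact hN N le_rfl
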